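/- Let p ≥ 1, let μ be a probability measure on ℝ^p that is invariant under every linear isometry of ℝ^p and satisfies μ({0}) = 0, and let X be a random vector with law μ. Then the real random variable ‖X‖ and the random direction vector X/‖X‖ (valued in the unit sphere of ℝ^p) are independent. -/

import Mathlib

open MeasureTheory ProbabilityTheory

noncomputable section

open Set

namespace Stmt14Aux

variable (p : ℕ)

abbrev H := EuclideanSpace ℝ (Fin p)

abbrev A := H p →L[ℝ] H p

abbrev G := unitary (A p)

instance : ContinuousStar (A p) := by
  constructor
  have : (star : A p → A p) = fun x => ContinuousLinearMap.adjoint x := by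
    funext x; rw [ContinuousLinearMap.star_eq_adjoint]
  rw [this]
  exact (ContinuousLinearMap.adjoint : A p ≃ₗᵢ⋆[ℝ] A p).continuous

instance : IsTopologicalGroup (G p) where
  continuous_mul := by continuity
  continuous_inv := by
    apply continuous_induced_rng.2
    exact continuous_star.comp continuous_subtype_val

instance : CompactSpace (G p) := by
  have hc : IsCompact (unitary (A p) : Set (A p)) := by
    apply Metric.isCompact_of_isClosed_isBounded
    · have h : (unitary (A p) : Set (A p)) =
          {x : A p | star x * x = 1} ∩ {x : A p | x * star x = 1} := by
        ext x; exact Unitary.mem_iff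
      rw [h]
      exact ((isClosed_singleton.preimage (continuous_star.mul continuous_id)).inter
        (isClosed_singleton.preimage (continuous_id.mul continuous_star)))
    · apply Bornology.IsBounded.subset (Metric.isBounded_closedBall (x := (0 : A p)) (r := 1))
      intro x hx
      simp only [Metric.mem_closedBall, dist_zero_right]
      exact ContinuousLinearMap.opNorm_le_bound _ zero_le_one fun y => by
        rw [ContinuousLinearMap.norm_map_of_mem_unitary hx y, one_mul]
  exact isCompact_iff_compactSpace.mp hc

instance : MeasurableSpace (G p) := borel _
instance : BorelSpace (G p) := ⟨rfl⟩

set_option synthInstance.maxHeartbeats 1000000 in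
instance : LocallyCompactSpace (G p) := inferInstance

variable {p : ℕ}

/-- key uniqueness lemma: any isometry-invariant finite measure supported on the unit
sphere has, against a right-invariant measure on the unitary group, a product formula. -/
lemma key (ν : Measure (G p)) [IsFiniteMeasure ν] [ν.IsMulRightInvariant]
    (τ : Measure (H p)) [IsFiniteMeasure τ]
    (hτ : ∀ Q : H p ≃ₗᵢ[ℝ] H p, τ.map Q = τ)
    (hτs : τ {x : H p | ‖x‖ ≠ 1} = 0)
    (u₀ : H p) (hu₀ : ‖u₀‖ = 1)
    {t : Set (H p)} (ht : MeasurableSet t) :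
    τ t * ν univ = ν {c : G p | (c : A p) u₀ ∈ t} * τ univ := by
  classical
  set F : G p × H p → H p := fun q => (q.1 : A p) q.2 with hFdef
  have hF : Continuous F := by
    have h1 : Continuous fun q : G p × H p => ((q.1 : A p), q.2) :=
      (continuous_subtype_val.comp continuous_fst).prodMk continuous_snd
    exact isBoundedBilinearMap_apply.continuous.comp h1
  have hFt : MeasurableSet (F ⁻¹' t) := hF.measurable ht
  have hsec : ∀ c : G p, MeasurableSet {x : H p | (c : A p) x ∈ t} :=
    fun c => (c : A p).continuous.measurable ht
  have hsec' : ∀ x : H p, MeasurableSet {c : G p | (c : A p) x ∈ t} := by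
    intro x
    have : Continuous fun c : G p => (c : A p) x :=
      hF.comp (continuous_id.prodMk continuous_const)
    exact this.measurable ht
  -- the function
  set f : G p × H p → ENNReal := (F ⁻¹' t).indicator 1 with hfdef
  have hf : Measurable f := measurable_one.indicator hFt
  have swap : ∫⁻ c, ∫⁻ x, f (c, x) ∂τ ∂ν = ∫⁻ x, ∫⁻ c, f (c, x) ∂ν ∂τ :=
    lintegral_lintegral_swap hf.aemeasurable
  -- LHS
  have hL : ∫⁻ c, ∫⁻ x, f (c, x) ∂τ ∂ν = τ t * ν univ := by
    have h1 : ∀ c : G p, ∫⁻ x, f (c, x) ∂τ = τ t := by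
      intro c
      have he : ∀ x : H p, f (c, x) = ({x : H p | (c : A p) x ∈ t}).indicator 1 x := by
        intro x
        by_cases hx : (c : A p) x ∈ t <;>
          simp [hfdef, hFdef, Set.indicator_apply, hx]
      calc ∫⁻ x, f (c, x) ∂τ = ∫⁻ x, ({x : H p | (c : A p) x ∈ t}).indicator 1 x ∂τ := by
            simp only [he]
        _ = τ {x : H p | (c : A p) x ∈ t} := by
            rw [lintegral_indicator (hsec c)]; simp
        _ = τ t := by
            set Q := Unitary.linearIsometryEquiv (𝕜 := ℝ) c with hQ
            have hQc : ⇑(c : A p) = ⇑Q := by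
              rw [hQ]; rfl
            have : {x : H p | (c : A p) x ∈ t} = ⇑Q ⁻¹' t := by
              ext x; simp [hQc]
            rw [this, ← Measure.map_apply Q.continuous.measurable ht, hτ Q]
    simp only [h1]
    rw [lintegral_const]
  -- RHS
  have hR : ∫⁻ x, ∫⁻ c, f (c, x) ∂ν ∂τ = ν {c : G p | (c : A p) u₀ ∈ t} * τ univ := by
    have h1 : ∀ x : H p, ∫⁻ c, f (c, x) ∂ν = ν {c : G p | (c : A p) x ∈ t} := by
      intro x
      have he : ∀ c : G p, f (c, x) = ({c : G p | (c : A p) x ∈ t}).indicator 1 c := by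
        intro c
        by_cases hc : (c : A p) x ∈ t <;>
          simp [hfdef, hFdef, Set.indicator_apply, hc]
      calc ∫⁻ c, f (c, x) ∂ν = ∫⁻ c, ({c : G p | (c : A p) x ∈ t}).indicator 1 c ∂ν := by
            simp only [he]
        _ = ν {c : G p | (c : A p) x ∈ t} := by
            rw [lintegral_indicator (hsec' x)]; simp
    have h2 : ∀ x : H p, ‖x‖ = 1 →
        ν {c : G p | (c : A p) x ∈ t} = ν {c : G p | (c : A p) u₀ ∈ t} := by
      intro x hx
      -- find an isometry sending u₀ to x
      have hnorm : ‖u₀‖ = ‖x‖ := by rw [hu₀, hx]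
      set Q : H p ≃ₗᵢ[ℝ] H p := Submodule.reflection (ℝ ∙ (u₀ - x))ᗮ with hQ
      have hQx : Q u₀ = x := Submodule.reflection_sub hnorm
      set r : G p := (Unitary.linearIsometryEquiv (𝕜 := ℝ)).symm Q with hr
      have hrx : (r : A p) u₀ = x := by
        have : ⇑(r : A p) = ⇑Q := by
          rw [hr]
          exact congrArg _ (Unitary.coe_symm_linearIsometryEquiv_apply Q)
        rw [this, hQx]
      have hset : {c : G p | (c : A p) x ∈ t} = (· * r) ⁻¹' {c : G p | (c : A p) u₀ ∈ t} := by
        ext c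
        simp only [Set.mem_preimage, Set.mem_setOf_eq]
        have : ((c * r : G p) : A p) u₀ = (c : A p) x := by
          rw [Submonoid.coe_mul, ContinuousLinearMap.mul_apply, hrx]
        rw [this]
      rw [hset, measure_preimage_mul_right ν r _]
    have hae : ∀ᵐ x ∂τ, ‖x‖ = 1 := by
      rw [ae_iff]
      convert hτs using 2
    calc ∫⁻ x, ∫⁻ c, f (c, x) ∂ν ∂τ
        = ∫⁻ x, ν {c : G p | (c : A p) u₀ ∈ t} ∂τ := by
          refine lintegral_congr_ae ?_
          filter_upwards [hae] with x hx
          rw [h1 x, h2 x hx]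
      _ = ν {c : G p | (c : A p) u₀ ∈ t} * τ univ := lintegral_const _
  rw [← hL, swap, hR]

/-- direction map -/
def D : H p → H p := fun x => ‖x‖⁻¹ • x

lemma hD : Measurable (D (p := p)) :=
  (measurable_norm.inv).smul measurable_id

lemma norm_D {x : H p} (hx : x ≠ 0) : ‖D x‖ = 1 := by
  have h : ‖x‖ ≠ 0 := norm_ne_zero_iff.2 hx
  rw [D, norm_smul, Real.norm_eq_abs, abs_of_nonneg (inv_nonneg.2 (norm_nonneg x)),
    inv_mul_cancel₀ h]

lemma D_comm (Q : H p ≃ₗᵢ[ℝ] H p) (x : H p) : D (Q x) = Q (D x) := by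
  rw [D, D, Q.norm_map, _root_.map_smul]

/-- conditional law of the direction, as a measure on `H p`, is invariant and spherical. -/
lemma cond (μ : Measure (H p)) [IsProbabilityMeasure μ]
    (hμ : ∀ Q : H p ≃ₗᵢ[ℝ] H p, μ.map Q = μ)
    (ν : Measure (G p)) [IsFiniteMeasure ν] [ν.IsMulRightInvariant]
    (u₀ : H p) (hu₀ : ‖u₀‖ = 1)
    {s : Set ℝ} (hs : MeasurableSet s) {t : Set (H p)} (ht : MeasurableSet t) :
    μ (D ⁻¹' t ∩ ((fun x : H p => ‖x‖) ⁻¹' s \ {0})) * ν univ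
      = ν {c : G p | (c : A p) u₀ ∈ t} * μ ((fun x : H p => ‖x‖) ⁻¹' s \ {0}) := by
  classical
  set M : Set (H p) := (fun x : H p => ‖x‖) ⁻¹' s \ {0} with hMdef
  have hM : MeasurableSet M := (measurable_norm hs).diff (measurableSet_singleton 0)
  set τ : Measure (H p) := (μ.restrict M).map D with hτdef
  haveI : IsFiniteMeasure τ := by
    constructor
    rw [hτdef, Measure.map_apply hD MeasurableSet.univ]
    exact measure_lt_top _ _
  have hτinv : ∀ Q : H p ≃ₗᵢ[ℝ] H p, τ.map Q = τ := by
    intro Q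
    have hQM : ⇑Q ⁻¹' M = M := by
      ext x
      simp only [hMdef, Set.mem_preimage, Set.mem_diff, Set.mem_singleton_iff,
        Set.mem_setOf_eq, Q.norm_map]
      constructor
      · rintro ⟨h1, h2⟩
        exact ⟨h1, fun h => h2 (by rw [h, map_zero])⟩
      · rintro ⟨h1, h2⟩
        refine ⟨h1, fun h => h2 ?_⟩
        have := congrArg Q.symm h
        simpa using this
    have hres : (μ.restrict M).map Q = μ.restrict M := by
      have := Measure.restrict_map Q.continuous.measurable hM (μ := μ)
      rw [hμ Q, hQM] at this
      exact this.symm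
    calc τ.map Q = ((μ.restrict M).map D).map Q := by rw [hτdef]
      _ = (μ.restrict M).map (⇑Q ∘ D) := by
          rw [Measure.map_map Q.continuous.measurable hD]
      _ = (μ.restrict M).map (D ∘ ⇑Q) := by
          congr 1
          funext x
          simp only [Function.comp_apply]
          rw [D_comm]
      _ = ((μ.restrict M).map Q).map D := by
          rw [Measure.map_map hD Q.continuous.measurable]
      _ = τ := by rw [hres, hτdef]
  have hτs : τ {x : H p | ‖x‖ ≠ 1} = 0 := by
    have hset : MeasurableSet {x : H p | ‖x‖ ≠ 1} :=
      (measurable_norm (measurableSet_singleton 1)).compl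
    rw [hτdef, Measure.map_apply hD hset, Measure.restrict_apply (hD hset)]
    have hsub : D ⁻¹' {x : H p | ‖x‖ ≠ 1} ∩ M ⊆ (∅ : Set (H p)) := by
      intro x ⟨hx1, hx2⟩
      exact hx1 (norm_D hx2.2)
    have : μ (D ⁻¹' {x : H p | ‖x‖ ≠ 1} ∩ M) ≤ μ (∅ : Set (H p)) := measure_mono hsub
    simpa using this
  have hkey := key ν τ hτinv hτs u₀ hu₀ ht
  have hτt : τ t = μ (D ⁻¹' t ∩ M) := by
    rw [hτdef, Measure.map_apply hD ht, Measure.restrict_apply (hD ht)]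
  have hτu : τ univ = μ M := by
    rw [hτdef, Measure.map_apply hD MeasurableSet.univ, Set.preimage_univ,
      Measure.restrict_apply_univ]
  rw [hτt, hτu] at hkey
  exact hkey

lemma main_mu (p : ℕ) (hp : 1 ≤ p) (μ : Measure (H p)) [IsProbabilityMeasure μ]
    (hμ : ∀ Q : H p ≃ₗᵢ[ℝ] H p, μ.map Q = μ) (h0 : μ {0} = 0)
    {s : Set ℝ} (hs : MeasurableSet s) {t : Set (H p)} (ht : MeasurableSet t) :
    μ ((fun x : H p => ‖x‖) ⁻¹' s ∩ D ⁻¹' t)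
      = μ ((fun x : H p => ‖x‖) ⁻¹' s) * μ (D ⁻¹' t) := by
  classical
  set ν : Measure (G p) := (MeasureTheory.Measure.haar (G := G p)).inv with hν
  haveI : IsFiniteMeasure ν := by
    constructor
    rw [hν, Measure.inv_apply, Set.inv_univ]
    exact measure_lt_top _ _
  have hV0 : ν univ ≠ 0 := by
    rw [hν, Measure.inv_apply, Set.inv_univ]
    exact (isOpen_univ.measure_ne_zero _ Set.univ_nonempty)
  have hVt : ν univ ≠ ⊤ := measure_ne_top _ _
  set u₀ : H p := EuclideanSpace.single (⟨0, hp⟩ : Fin p) (1 : ℝ) with hu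
  have hu₀ : ‖u₀‖ = 1 := by
    rw [hu, EuclideanSpace.norm_single, norm_one]
  have h1 := cond μ hμ ν u₀ hu₀ hs ht
  have h2 := cond μ hμ ν u₀ hu₀ MeasurableSet.univ ht
  have huniv : (fun x : H p => ‖x‖) ⁻¹' (univ : Set ℝ) \ {0} = ({0}ᶜ : Set (H p)) := by
    rw [Set.preimage_univ]
    ext x; simp
  rw [huniv] at h2
  have hc : μ ({0}ᶜ : Set (H p)) = 1 := by
    rw [measure_compl (measurableSet_singleton 0) (measure_ne_top _ _), h0,
      measure_univ, tsub_zero]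
  have hDt : μ (D ⁻¹' t ∩ ({0}ᶜ : Set (H p))) = μ (D ⁻¹' t) := by
    rw [← Set.diff_eq]
    exact measure_diff_null h0
  rw [hc, hDt, mul_one] at h2
  -- h2 : μ (D ⁻¹' t) * ν univ = ν {c | c u₀ ∈ t}
  rw [← h2] at h1
  -- h1 : μ (D⁻¹t ∩ (N⁻¹s \ {0})) * ν univ = (μ (D⁻¹t) * ν univ) * μ (N⁻¹s \ {0})
  have hset1 : D ⁻¹' t ∩ ((fun x : H p => ‖x‖) ⁻¹' s \ {0})
      = ((fun x : H p => ‖x‖) ⁻¹' s ∩ D ⁻¹' t) \ {0} := by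
    ext x
    simp only [Set.mem_inter_iff, Set.mem_diff]
    tauto
  rw [hset1, measure_diff_null h0, measure_diff_null h0] at h1
  have hre : μ (D ⁻¹' t) * ν univ * μ ((fun x : H p => ‖x‖) ⁻¹' s)
      = μ ((fun x : H p => ‖x‖) ⁻¹' s) * μ (D ⁻¹' t) * ν univ := by ring
  rw [hre] at h1
  exact (ENNReal.mul_left_inj hV0 hVt).1 h1

end Stmt14Aux

/-- if the law `μ` of a random vector `X` in `ℝ^p` is invariant under
every linear isometry and puts no mass at `0`, then `‖X‖` and the direction vector
`X/‖X‖` are independent. -/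
theorem stmt14 (p : ℕ) (hp : 1 ≤ p)
    (Ω : Type*) [MeasurableSpace Ω] (P : Measure Ω) [IsProbabilityMeasure P]
    (X : Ω → EuclideanSpace ℝ (Fin p)) (hX : Measurable X)
    (μ : Measure (EuclideanSpace ℝ (Fin p))) [IsProbabilityMeasure μ]
    (hlaw : P.map X = μ)
    (hμ : ∀ Q : EuclideanSpace ℝ (Fin p) ≃ₗᵢ[ℝ] EuclideanSpace ℝ (Fin p),
      μ.map Q = μ)
    (h0 : μ {0} = 0) :
    IndepFun (fun ω => ‖X ω‖) (fun ω => (‖X ω‖)⁻¹ • X ω) P := by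
  rw [ProbabilityTheory.indepFun_iff_measure_inter_preimage_eq_mul]
  intro s t hs ht
  have hP : ∀ W : Set (EuclideanSpace ℝ (Fin p)), MeasurableSet W → P (X ⁻¹' W) = μ W := by
    intro W hW
    rw [← hlaw, Measure.map_apply hX hW]
  have e1 : (fun ω => ‖X ω‖) ⁻¹' s = X ⁻¹' ((fun x : Stmt14Aux.H p => ‖x‖) ⁻¹' s) := rfl
  have e2 : (fun ω => (‖X ω‖)⁻¹ • X ω) ⁻¹' t = X ⁻¹' (Stmt14Aux.D ⁻¹' t) := rfl
  have hNs : MeasurableSet ((fun x : Stmt14Aux.H p => ‖x‖) ⁻¹' s) := measurable_norm hs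
  have hDt : MeasurableSet (Stmt14Aux.D (p := p) ⁻¹' t) := Stmt14Aux.hD ht
  rw [e1, e2, ← Set.preimage_inter, hP _ (hNs.inter hDt), hP _ hNs, hP _ hDt]
  exact Stmt14Aux.main_mu p hp μ hμ h0 hs ht

end
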